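/- Let n be a positive natural number and let s_1, …, s_{n+1} : Ω → ℝ be exchangeable real-valued random variables on a probability space (Ω, 𝒜, P) such that almost surely all of s_1(ω), …, s_{n+1}(ω) are pairwise distinct. Then the rank of s_{n+1}, defined as R(ω) = |{i ∈ {1,…,n+1} : s_i(ω) ≥ s_{n+1}(ω)}|, is uniformly distributed on {1, 2, …, n+1}, i.e., P[R = k] = 1/(n+1) for every k ∈ {1,…,n+1}. -/

import Mathlib

open MeasureTheory

open MeasureTheory Finset

namespace ConformalAux

variable {m : ℕ}

noncomputable def rnk (j : Fin m) (x : Fin m → ℝ) : ℕ :=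
  (Finset.univ.filter (fun i => x i ≥ x j)).card

lemma measurable_rnk (j : Fin m) : Measurable (rnk j) := by
  have h : rnk j = fun x => ∑ i : Fin m, if x i ≥ x j then 1 else 0 := by
    funext x; unfold rnk; rw [Finset.card_filter]
  rw [h]
  refine Finset.measurable_sum _ fun i _ => Measurable.ite ?_ measurable_const measurable_const
  exact measurableSet_le (measurable_pi_apply j) (measurable_pi_apply i)

lemma rnk_lt (x : Fin m → ℝ) {j j' : Fin m} (h : x j < x j') : rnk j' x < rnk j x := by
  apply Finset.card_lt_card
  rw [Finset.ssubset_iff_of_subset]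
  · exact ⟨j, by simp, by simp [not_le.mpr h]⟩
  · intro i hi
    simp only [mem_filter, mem_univ, true_and, ge_iff_le] at *
    exact le_trans h.le hi

lemma rnk_inj (x : Fin m → ℝ) (hx : ∀ i j : Fin m, i ≠ j → x i ≠ x j) :
    Function.Injective (fun j => rnk j x) := by
  intro a b hab
  by_contra hne
  rcases lt_or_gt_of_ne (hx a b hne) with h | h
  · exact absurd hab (rnk_lt x h).ne'
  · exact absurd hab (rnk_lt x h).ne

lemma rnk_mem (x : Fin m → ℝ) (j : Fin m) : rnk j x ∈ Finset.Icc 1 m := by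
  rw [Finset.mem_Icc]
  constructor
  · have : j ∈ Finset.univ.filter (fun i => x i ≥ x j) := by simp
    exact Finset.card_pos.mpr ⟨j, this⟩
  · simpa [rnk] using Finset.card_filter_le Finset.univ (fun i => x i ≥ x j)

lemma exists_rnk (x : Fin m → ℝ) (hx : ∀ i j : Fin m, i ≠ j → x i ≠ x j)
    {k : ℕ} (hk : k ∈ Finset.Icc 1 m) : ∃ j, rnk j x = k := by
  have himg : Finset.image (fun j => rnk j x) Finset.univ = Finset.Icc 1 m := by
    apply Finset.eq_of_subset_of_card_le
    · intro a ha
      simp only [mem_image] at ha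
      obtain ⟨j, _, rfl⟩ := ha
      exact rnk_mem x j
    · rw [Finset.card_image_of_injective _ (rnk_inj x hx)]
      simp [Nat.card_Icc]
  have : k ∈ Finset.image (fun j => rnk j x) Finset.univ := himg ▸ hk
  simpa using this

lemma rnk_comp (σ : Equiv.Perm (Fin m)) (j : Fin m) (x : Fin m → ℝ) :
    rnk j (fun i => x (σ i)) = rnk (σ j) x := by
  unfold rnk
  apply Finset.card_bij (fun i _ => σ i)
  · intro a ha; simpa using by simpa using ha
  · intro a _ b _ hab; exact σ.injective hab
  · intro b hb
    refine ⟨σ.symm b, ?_, by simp⟩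
    simpa using by simpa using hb

end ConformalAux

/-- Rank-uniformity lemma: for exchangeable, almost surely pairwise distinct scores
`s 0, …, s n`, the rank `R ω = |{i : s i ω ≥ s (last) ω}|` of the last score is
uniformly distributed on `{1, …, n+1}`. -/
theorem conformal_rank_uniform
    {Ω : Type*} [MeasurableSpace Ω] (P : Measure Ω) [IsProbabilityMeasure P]
    (n : ℕ) (hn : 0 < n)
    (s : Fin (n + 1) → Ω → ℝ) (hs : ∀ i, Measurable (s i))
    (hexch : ∀ σ : Equiv.Perm (Fin (n + 1)),
      Measure.map (fun ω => fun i => s (σ i) ω) P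
        = Measure.map (fun ω => fun i => s i ω) P)
    (hdistinct : ∀ᵐ ω ∂P, ∀ i j : Fin (n + 1), i ≠ j → s i ω ≠ s j ω)
    (R : Ω → ℕ)
    (hR : ∀ ω, R ω =
      (Finset.univ.filter (fun i : Fin (n + 1) => s i ω ≥ s (Fin.last n) ω)).card) :
    ∀ k ∈ Finset.Icc 1 (n + 1), P {ω | R ω = k} = ((n : ENNReal) + 1)⁻¹ := by
  intro k hk
  classical
  set S : Ω → (Fin (n + 1) → ℝ) := fun ω i => s i ω with hS
  have hSm : Measurable S := measurable_pi_lambda _ hs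
  set μ := Measure.map S P with hμ
  have hμprob : IsProbabilityMeasure μ := Measure.isProbabilityMeasure_map hSm.aemeasurable
  set D : Set (Fin (n + 1) → ℝ) := {x | ∀ i j : Fin (n + 1), i ≠ j → x i ≠ x j} with hD
  have hDm : MeasurableSet D := by
    have h1 : D = ⋂ (i) (j) (_ : i ≠ j), {x : Fin (n + 1) → ℝ | x i ≠ x j} := by
      ext x; simp [hD]
    rw [h1]
    exact MeasurableSet.iInter fun i => MeasurableSet.iInter fun j =>
      MeasurableSet.iInter fun _ =>
        (measurableSet_eq_fun (measurable_pi_apply i) (measurable_pi_apply j)).compl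
  have hDnull : μ Dᶜ = 0 := by
    rw [hμ, Measure.map_apply hSm hDm.compl]
    have : S ⁻¹' Dᶜ = {ω | ¬ ∀ i j : Fin (n + 1), i ≠ j → s i ω ≠ s j ω} := by
      ext ω; simp [hD, hS]
    rw [this]
    exact hdistinct
  have hDone : μ D = 1 := by
    have := measure_add_measure_compl (μ := μ) hDm
    rw [hDnull, add_zero, measure_univ] at this
    exact this
  have hperm : ∀ σ : Equiv.Perm (Fin (n + 1)),
      Measure.map (fun x : Fin (n + 1) → ℝ => fun i => x (σ i)) μ = μ := by
    intro σ
    have hpm : Measurable (fun x : Fin (n + 1) → ℝ => fun i => x (σ i)) :=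
      measurable_pi_lambda _ fun i => measurable_pi_apply _
    rw [hμ, Measure.map_map hpm hSm]
    have hc : ((fun x : Fin (n + 1) → ℝ => fun i => x (σ i)) ∘ S)
        = fun ω => fun i => s (σ i) ω := rfl
    rw [hc]
    exact hexch σ
  have hEm : ∀ (j : Fin (n + 1)), MeasurableSet {x : Fin (n + 1) → ℝ | ConformalAux.rnk j x = k} :=
    fun j => ConformalAux.measurable_rnk j (measurableSet_singleton k)
  have hsame : ∀ j : Fin (n + 1),
      μ {x | ConformalAux.rnk j x = k} = μ {x | ConformalAux.rnk (Fin.last n) x = k} := by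
    intro j
    set σ := Equiv.swap j (Fin.last n) with hσ
    have hpm : Measurable (fun x : Fin (n + 1) → ℝ => fun i => x (σ i)) :=
      measurable_pi_lambda _ fun i => measurable_pi_apply _
    have hcalc : μ {x | ConformalAux.rnk (Fin.last n) x = k}
        = μ {x | ConformalAux.rnk j x = k} :=
      calc μ {x | ConformalAux.rnk (Fin.last n) x = k}
        = Measure.map (fun x : Fin (n + 1) → ℝ => fun i => x (σ i)) μ
            {x | ConformalAux.rnk (Fin.last n) x = k} := by rw [hperm σ]
      _ = μ ((fun x : Fin (n + 1) → ℝ => fun i => x (σ i)) ⁻¹'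
            {x | ConformalAux.rnk (Fin.last n) x = k}) :=
          Measure.map_apply hpm (hEm _)
      _ = μ {x | ConformalAux.rnk j x = k} := by
          congr 1
          ext x
          simp only [Set.mem_preimage, Set.mem_setOf_eq, ConformalAux.rnk_comp]
          rw [hσ, Equiv.swap_apply_right]
    exact hcalc.symm
  have hsum : ∑ j : Fin (n + 1), μ ({x | ConformalAux.rnk j x = k} ∩ D) = μ D := by
    rw [← measure_biUnion_finset]
    · congr 1
      ext x
      constructor
      · intro hx
        simp only [Set.mem_iUnion, Set.mem_inter_iff] at hx
        obtain ⟨j, _, _, hxD⟩ := hx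
        exact hxD
      · intro hx
        obtain ⟨j, hj⟩ := ConformalAux.exists_rnk x hx hk
        exact Set.mem_biUnion (Finset.mem_univ j) ⟨hj, hx⟩
    · intro a _ b _ hab
      simp only [Function.onFun, Set.disjoint_left]
      rintro x ⟨hxa, hxD⟩ ⟨hxb, _⟩
      exact hab (ConformalAux.rnk_inj x hxD (hxa.trans hxb.symm))
    · exact fun j _ => (hEm j).inter hDm
  have hinter : ∀ j : Fin (n + 1),
      μ ({x | ConformalAux.rnk j x = k} ∩ D) = μ {x | ConformalAux.rnk j x = k} := by
    intro j
    apply le_antisymm (measure_mono Set.inter_subset_left)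
    calc μ {x | ConformalAux.rnk j x = k}
        ≤ μ (({x | ConformalAux.rnk j x = k} ∩ D) ∪ Dᶜ) := by
          apply measure_mono
          intro x hx
          by_cases hxD : x ∈ D
          · exact Or.inl ⟨hx, hxD⟩
          · exact Or.inr hxD
      _ ≤ μ ({x | ConformalAux.rnk j x = k} ∩ D) + μ Dᶜ := measure_union_le _ _
      _ = μ ({x | ConformalAux.rnk j x = k} ∩ D) := by rw [hDnull, add_zero]
  have key : (n + 1 : ENNReal) * μ {x | ConformalAux.rnk (Fin.last n) x = k} = 1 := by
    have := hsum
    simp_rw [hinter, hsame] at this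
    rw [Finset.sum_const, Finset.card_univ, Fintype.card_fin, hDone, nsmul_eq_mul] at this
    rw [show ((n : ENNReal) + 1) = ((n + 1 : ℕ) : ENNReal) by push_cast; ring]
    exact this
  have hPμ : P {ω | R ω = k} = μ {x | ConformalAux.rnk (Fin.last n) x = k} := by
    rw [hμ, Measure.map_apply hSm (hEm _)]
    congr 1
    ext ω
    simp only [Set.mem_preimage, Set.mem_setOf_eq, hR ω, ConformalAux.rnk, hS]
  rw [hPμ]
  have hne : (n + 1 : ENNReal) ≠ 0 := by
    exact_mod_cast Nat.succ_ne_zero n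
  have hnt : (n + 1 : ENNReal) ≠ ⊤ :=
    ENNReal.add_ne_top.mpr ⟨ENNReal.natCast_ne_top n, ENNReal.one_ne_top⟩
  calc μ {x | ConformalAux.rnk (Fin.last n) x = k}
      = (n + 1 : ENNReal)⁻¹ * ((n + 1 : ENNReal) * μ {x | ConformalAux.rnk (Fin.last n) x = k}) := by
        rw [← mul_assoc, ENNReal.inv_mul_cancel hne hnt, one_mul]
    _ = (n + 1 : ENNReal)⁻¹ := by rw [key, mul_one]
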